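/- Let Λ = [[a,b],[c,d]] be a real 2×2 matrix with ad − bc = 1 and b > 0, let τ > 0, ω₀ = 2π/τ and κ = √(2πb/τ). Then the family of functions e_n(t) = κ · k_Λ(t, n ω₀ b), indexed by n ∈ ℤ and restricted to the interval [0,τ], is a complete orthonormal system (a Hilbert basis) of L²([0,τ]; ℂ); i.e., ∫_0^τ e_n(t) conj(e_m(t)) dt = 1 if n = m and 0 otherwise, and the closed linear span of {e_n : n ∈ ℤ} is all of L²([0,τ]; ℂ). (This is the basis underlying the Linear Canonical Series expansion.) -/

import Mathlib

open MeasureTheory Complex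

noncomputable section

/-- The LCT kernel `k_Λ(t, ω) = (1/√(-2πib)) exp(-(i/(2b))(a t² + d ω² - 2 ω t))`,
where `√` is the principal branch of the complex square root. -/
def lctKernel (a b d : ℝ) (t ω : ℝ) : ℂ :=
  (((-2 : ℂ) * (Real.pi : ℂ) * Complex.I * (b : ℂ)) ^ ((1 : ℂ) / 2))⁻¹ *
    Complex.exp (-(Complex.I / (2 * (b : ℂ))) *
      ((a : ℂ) * (t : ℂ) ^ 2 + (d : ℂ) * (ω : ℂ) ^ 2 - 2 * (ω : ℂ) * (t : ℂ)))

set_option maxHeartbeats 2000000 in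
/-- **The Linear Canonical Series basis.**  The family `e_n(t) = κ k_Λ(t, n ω₀ b)`,
`n ∈ ℤ`, restricted to `[0, τ]`, is orthonormal in `L²([0,τ]; ℂ)` and is a complete
orthonormal system (a Hilbert basis) of that space. -/
theorem lcs_complete_orthonormal_system (a b c d : ℝ) (hdet : a * d - b * c = 1) (hb : 0 < b)
    (τ : ℝ) (hτ : 0 < τ) (ω₀ κ : ℝ)
    (hω₀ : ω₀ = 2 * Real.pi / τ) (hκ : κ = Real.sqrt (2 * Real.pi * b / τ))
    (e : ℤ → ℝ → ℂ)
    (he : ∀ (n : ℤ) (t : ℝ), e n t = (κ : ℂ) * lctKernel a b d t ((n : ℝ) * ω₀ * b)) :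
    (∀ n m : ℤ, (∫ t in Set.Icc (0 : ℝ) τ, e n t * (starRingEnd ℂ) (e m t)) =
      if n = m then 1 else 0) ∧
    ∃ B : HilbertBasis ℤ ℂ (Lp ℂ 2 (volume.restrict (Set.Icc (0 : ℝ) τ))),
      ∀ n : ℤ, ⇑(B n) =ᵐ[volume.restrict (Set.Icc (0 : ℝ) τ)] e n := by
  haveI : Fact (0 < τ) := ⟨hτ⟩
  set μ : Measure ℝ := volume.restrict (Set.Icc (0 : ℝ) τ) with hμ_def
  have hπ : (0:ℝ) < Real.pi := Real.pi_pos
  have hb' : (b:ℂ) ≠ 0 := Complex.ofReal_ne_zero.mpr hb.ne'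
  have hτ' : (τ:ℂ) ≠ 0 := Complex.ofReal_ne_zero.mpr hτ.ne'
  have hω₀pos : 0 < ω₀ := by rw [hω₀]; positivity
  have hκpos : 0 < κ := by rw [hκ]; exact Real.sqrt_pos.mpr (by positivity)
  set s : ℂ := ((-2 : ℂ) * (Real.pi : ℂ) * Complex.I * (b : ℂ)) ^ ((1 : ℂ) / 2) with hs_def
  set g : ℝ → ℂ := fun t => Complex.exp ((((-(a/(2*b))*t^2) : ℝ) : ℂ) * Complex.I) with hg_def
  set E : ℤ → ℝ → ℂ := fun n t => Complex.exp (Complex.I * (((n:ℝ):ℂ) * (ω₀:ℂ)) * (t:ℂ))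
    with hE_def
  set C : ℤ → ℂ := fun n =>
    (κ:ℂ) * s⁻¹ * Complex.exp ((((-(d/(2*b))*((n:ℝ)*ω₀*b)^2) : ℝ):ℂ) * Complex.I) with hC_def
  -- factorization
  have hfact : ∀ n t, e n t = C n * g t * E n t := by
    intro n t
    rw [he, lctKernel]
    simp only [hC_def, hg_def, hE_def]
    have harg : -(Complex.I / (2 * (b : ℂ))) *
        ((a : ℂ) * (t : ℂ) ^ 2 + (d : ℂ) * (((n:ℝ) * ω₀ * b : ℝ) : ℂ) ^ 2
          - 2 * (((n:ℝ) * ω₀ * b : ℝ) : ℂ) * (t : ℂ))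
        = (((-(d/(2*b))*((n:ℝ)*ω₀*b)^2) : ℝ):ℂ) * Complex.I + ((((-(a/(2*b))*t^2) : ℝ) : ℂ) * Complex.I
          + Complex.I * (((n:ℝ):ℂ) * (ω₀:ℂ)) * (t:ℂ)) := by
      push_cast
      field_simp
      ring
    rw [harg, Complex.exp_add, Complex.exp_add]
    ring
  -- moduli
  have hz : ((-2 : ℂ) * (Real.pi : ℂ) * Complex.I * (b : ℂ)) ≠ 0 := by
    simp [Complex.ext_iff, Complex.I_ne_zero, hπ.ne', hb.ne']
  have hs_abs : ‖s‖ = Real.sqrt (2 * Real.pi * b) := by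
    rw [hs_def, Complex.norm_cpow_of_ne_zero hz]
    have h1 : ‖((-2 : ℂ) * (Real.pi : ℂ) * Complex.I * (b : ℂ))‖ = 2 * Real.pi * b := by
      simp [abs_of_pos hπ, abs_of_pos hb]
    rw [h1]
    norm_num
    rw [Real.sqrt_eq_rpow]
  have hs_ne : s ≠ 0 := by
    intro h
    rw [h, norm_zero] at hs_abs
    have h2 : (0:ℝ) < Real.sqrt (2 * Real.pi * b) := Real.sqrt_pos.mpr (by positivity)
    linarith [hs_abs ▸ h2]
  have hg_abs : ∀ t, ‖g t‖ = 1 := by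
    intro t
    simp only [hg_def]
    exact Complex.norm_exp_ofReal_mul_I _
  have habsE : ∀ n t, ‖E n t‖ = 1 := by
    intro n t
    simp only [hE_def]
    have h3 : Complex.I * (((n:ℝ):ℂ) * (ω₀:ℂ)) * (t:ℂ) = ((((n:ℝ)*ω₀*t : ℝ)):ℂ) * Complex.I := by
      push_cast; ring
    rw [h3, Complex.norm_exp_ofReal_mul_I]
  have habsC : ∀ n, ‖C n‖ ^ 2 = 1/τ := by
    intro n
    simp only [hC_def]
    rw [norm_mul, norm_mul, norm_inv, hs_abs, Complex.norm_exp_ofReal_mul_I,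
      Complex.norm_of_nonneg hκpos.le, mul_one, hκ]
    rw [mul_pow, inv_pow, Real.sq_sqrt (by positivity), Real.sq_sqrt (by positivity)]
    field_simp
  have hC_ne : ∀ n, C n ≠ 0 := by
    intro n h
    have h4 := habsC n
    rw [h, norm_zero] at h4
    have h5 : (0:ℝ) < 1/τ := by positivity
    simp_all
  have hCC : ∀ n, C n * (starRingEnd ℂ) (C n) = ((1/τ : ℝ) : ℂ) := by
    intro n
    rw [Complex.mul_conj]
    norm_cast
    rw [← Complex.sq_norm]
    exact habsC n
  -- the basic integral
  have hexp_int : ∀ k : ℤ, (∫ t in Set.Icc (0:ℝ) τ, E k t) = if k = 0 then (τ:ℂ) else 0 := by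
    intro k
    rw [integral_Icc_eq_integral_Ioc, ← intervalIntegral.integral_of_le hτ.le]
    simp only [hE_def]
    rcases eq_or_ne k 0 with hk | hk
    · subst hk
      simp
    · have hc : Complex.I * (((k:ℝ):ℂ) * (ω₀:ℂ)) ≠ 0 :=
        mul_ne_zero Complex.I_ne_zero (mul_ne_zero
          (Complex.ofReal_ne_zero.mpr (Int.cast_ne_zero.mpr hk))
          (Complex.ofReal_ne_zero.mpr hω₀pos.ne'))
      rw [if_neg hk, integral_exp_mul_complex hc]
      have hωτ : ω₀ * τ = 2 * Real.pi := by rw [hω₀]; field_simp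
      have hωτ' : ((ω₀ : ℂ)) * (τ : ℂ) = 2 * (Real.pi : ℂ) := by
        have := congrArg (Complex.ofReal) hωτ
        push_cast at this
        exact this
      have hτω : Complex.I * (((k:ℝ):ℂ) * (ω₀:ℂ)) * (τ:ℂ)
          = (k:ℂ) * (2 * (Real.pi:ℂ) * Complex.I) := by
        push_cast at hωτ' ⊢
        linear_combination (Complex.I * (k:ℂ)) * hωτ'
      rw [hτω, Complex.exp_int_mul_two_pi_mul_I]
      norm_num
  -- pointwise product formula
  have hg1 : ∀ t, g t * (starRingEnd ℂ) (g t) = 1 := by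
    intro t
    rw [Complex.mul_conj, ← Complex.ofReal_one]
    congr 1
    rw [← Complex.sq_norm, hg_abs]
    norm_num
  have hEE : ∀ (k l : ℤ) (t : ℝ), E k t * (starRingEnd ℂ) (E l t) = E (k - l) t := by
    intro k l t
    simp only [hE_def]
    rw [← Complex.exp_conj, ← Complex.exp_add]
    congr 1
    simp only [map_mul, Complex.conj_I, Complex.conj_ofReal]
    push_cast
    ring
  have hprod : ∀ (n m : ℤ) (t : ℝ), e n t * (starRingEnd ℂ) (e m t)
      = (C n * (starRingEnd ℂ) (C m)) * E (n - m) t := by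
    intro n m t
    rw [hfact n t, hfact m t, map_mul, map_mul]
    calc C n * g t * E n t * ((starRingEnd ℂ) (C m) * (starRingEnd ℂ) (g t) * (starRingEnd ℂ) (E m t))
        = (C n * (starRingEnd ℂ) (C m)) * ((g t * (starRingEnd ℂ) (g t)) *
            (E n t * (starRingEnd ℂ) (E m t))) := by ring
      _ = (C n * (starRingEnd ℂ) (C m)) * E (n - m) t := by rw [hg1 t, hEE n m t, one_mul]
  -- Part 1
  have part1 : ∀ n m : ℤ, (∫ t in Set.Icc (0 : ℝ) τ, e n t * (starRingEnd ℂ) (e m t)) =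
      if n = m then 1 else 0 := by
    intro n m
    have h6 : (∫ t in Set.Icc (0 : ℝ) τ, e n t * (starRingEnd ℂ) (e m t))
        = (C n * (starRingEnd ℂ) (C m)) * ∫ t in Set.Icc (0 : ℝ) τ, E (n - m) t := by
      rw [← integral_const_mul]
      exact integral_congr_ae (Filter.Eventually.of_forall (fun t => hprod n m t))
    rw [h6, hexp_int (n - m)]
    by_cases h : n = m
    · subst h
      rw [if_pos rfl, if_pos (sub_self n), hCC n]
      push_cast
      field_simp
    · rw [if_neg (sub_ne_zero.mpr h), if_neg h, mul_zero]
  -- Membership in L²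
  haveI : IsFiniteMeasure μ := by
    constructor
    rw [hμ_def, Measure.restrict_apply_univ, Real.volume_Icc]
    exact ENNReal.ofReal_lt_top
  have hgcont : Continuous g := by
    simp only [hg_def]; fun_prop
  have hEcont : ∀ n, Continuous (E n) := by
    intro n; simp only [hE_def]; fun_prop
  have hecont : ∀ n, Continuous (e n) := by
    intro n
    have h7 : e n = fun t => C n * g t * E n t := funext (hfact n)
    rw [h7]
    exact (continuous_const.mul hgcont).mul (hEcont n)
  have habse : ∀ n t, ‖e n t‖ = ‖C n‖ := by
    intro n t
    rw [hfact n t, norm_mul, norm_mul, hg_abs, habsE, mul_one, mul_one]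
  have hmem : ∀ n, MemLp (e n) 2 μ := fun n =>
    MemLp.of_bound ((hecont n).aestronglyMeasurable) (‖C n‖)
      (Filter.Eventually.of_forall (fun t => le_of_eq (habse n t)))
  set v : ℤ → Lp ℂ 2 μ := fun n => (hmem n).toLp (e n) with hv_def
  -- orthonormality
  have hinner : ∀ n m : ℤ, (inner ℂ (v n) (v m) : ℂ)
      = (starRingEnd ℂ) (∫ t in Set.Icc (0 : ℝ) τ, e n t * (starRingEnd ℂ) (e m t)) := by
    intro n m
    rw [MeasureTheory.L2.inner_def, ← integral_conj]
    apply integral_congr_ae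
    filter_upwards [(hmem n).coeFn_toLp, (hmem m).coeFn_toLp] with t h1 h2
    rw [RCLike.inner_apply, h1, h2, map_mul, Complex.conj_conj, mul_comm]
  have horth : Orthonormal ℂ v := by
    rw [orthonormal_iff_ite]
    intro n m
    rw [hinner n m, part1 n m]
    split <;> simp
  -- completeness
  have hres : volume.restrict (Set.Ioc (0:ℝ) (0 + τ)) = μ := by
    rw [zero_add, hμ_def]
    exact Measure.restrict_congr_set Ioc_ae_eq_Icc
  have hKbot : (Submodule.span ℂ (Set.range v))ᗮ = ⊥ := by
    rw [Submodule.eq_bot_iff]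
    intro f hf
    have hfm := MeasureTheory.Lp.aestronglyMeasurable f
    set f₀ : ℝ → ℂ := hfm.mk _ with hf₀_def
    have hf₀sm : StronglyMeasurable f₀ := hfm.stronglyMeasurable_mk
    have hfe : (⇑f : ℝ → ℂ) =ᵐ[μ] f₀ := hfm.ae_eq_mk
    set h : ℝ → ℂ := fun t => (starRingEnd ℂ) (g t) * f₀ t with hh_def
    have hhsm : StronglyMeasurable h :=
      ((continuous_conj.comp hgcont).stronglyMeasurable).mul hf₀sm
    have hφ : ∀ n : ℤ, (∫ t, (starRingEnd ℂ) (E n t) * h t ∂μ) = 0 := by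
      intro n
      have h0 : (inner ℂ (v n) f : ℂ) = 0 :=
        Submodule.inner_right_of_mem_orthogonal (Submodule.subset_span (Set.mem_range_self n)) hf
      have heq : (inner ℂ (v n) f : ℂ)
          = (starRingEnd ℂ) (C n) * ∫ t, (starRingEnd ℂ) (E n t) * h t ∂μ := by
        rw [MeasureTheory.L2.inner_def, ← integral_const_mul]
        apply integral_congr_ae
        filter_upwards [(hmem n).coeFn_toLp, hfe] with t h1 h2
        rw [RCLike.inner_apply, h1, h2, hfact n t, map_mul, map_mul]
        simp only [hh_def]
        ring
      rw [heq] at h0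
      refine (mul_eq_zero.mp h0).resolve_left (fun hzero => hC_ne n ?_)
      rw [← Complex.conj_conj (C n), hzero, map_zero]
    set G : AddCircle τ → ℂ := AddCircle.liftIoc τ 0 h with hG_def
    have hGsm : StronglyMeasurable G := by
      have h8 : G = fun x => h ((AddCircle.equivIoc τ 0 x : ℝ)) := rfl
      rw [h8]
      exact hhsm.comp_measurable
        (measurable_subtype_coe.comp (AddCircle.measurableEquivIoc τ 0).measurable)
    have hGcomp : ∀ᵐ (t : ℝ) ∂(volume.restrict (Set.Ioc (0:ℝ) (0+τ))),
        G ((t : ℝ) : AddCircle τ) = h t := by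
      filter_upwards [ae_restrict_mem measurableSet_Ioc] with t ht
      exact AddCircle.liftIoc_coe_apply ht
    have hhmem : MemLp h 2 (volume.restrict (Set.Ioc (0:ℝ) (0+τ))) := by
      rw [hres]
      have hf₀mem : MemLp f₀ 2 μ := (MeasureTheory.Lp.memLp f).ae_eq hfe
      refine hf₀mem.of_le hhsm.aestronglyMeasurable ?_
      refine Filter.Eventually.of_forall (fun t => ?_)
      simp only [hh_def]
      rw [norm_mul, RCLike.norm_conj, hg_abs, one_mul]
    have hGmemVol : MemLp G 2 (volume : Measure (AddCircle τ)) := by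
      refine ⟨hGsm.aestronglyMeasurable, ?_⟩
      rw [← eLpNorm_comp_measurePreserving hGsm.aestronglyMeasurable
        (AddCircle.measurePreserving_mk τ 0)]
      have hcomp : (G ∘ (QuotientAddGroup.mk : ℝ → AddCircle τ)) = fun t : ℝ =>
        G ((t : ℝ) : AddCircle τ) := rfl
      rw [hcomp, eLpNorm_congr_ae (hGcomp.mono (fun t ht => ht))]
      exact hhmem.2
    have hhaar : (AddCircle.haarAddCircle : Measure (AddCircle τ))
        = (ENNReal.ofReal τ)⁻¹ • (volume : Measure (AddCircle τ)) := by
      rw [AddCircle.volume_eq_smul_haarAddCircle, smul_smul,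
        ENNReal.inv_mul_cancel (ENNReal.ofReal_pos.mpr hτ).ne' ENNReal.ofReal_ne_top, one_smul]
    have hGmem : MemLp G 2 (AddCircle.haarAddCircle : Measure (AddCircle τ)) := by
      rw [hhaar]
      exact hGmemVol.smul_measure (ENNReal.inv_ne_top.mpr (ENNReal.ofReal_pos.mpr hτ).ne')
    set X : Lp ℂ 2 (AddCircle.haarAddCircle : Measure (AddCircle τ)) := hGmem.toLp G with hX_def
    have hXcoeff : ∀ n : ℤ, fourierCoeff (⇑X : AddCircle τ → ℂ) n = 0 := by
      intro n
      have h9 : fourierCoeff (⇑X : AddCircle τ → ℂ) n = fourierCoeff G n := by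
        simp only [fourierCoeff]
        apply integral_congr_ae
        filter_upwards [hGmem.coeFn_toLp] with x hx
        rw [hx]
      rw [h9, hG_def, fourierCoeff_liftIoc_eq, fourierCoeffOn_eq_integral]
      have hfour : ∀ (x:ℝ), ((fourier (-n)) (x : AddCircle (0+τ-0)) : ℂ)
          = (starRingEnd ℂ) (E n x) := by
        intro x
        rw [fourier_coe_apply]
        simp only [hE_def]
        rw [← Complex.exp_conj]
        congr 1
        simp only [map_mul, Complex.conj_I, Complex.conj_ofReal]
        rw [hω₀]
        have h0τ : ((0:ℝ) + τ - 0 : ℝ) = τ := by ring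
        rw [h0τ]
        push_cast
        field_simp
      have h10 : (∫ x in (0:ℝ)..(0+τ), (fourier (-n)) (x : AddCircle (0+τ-0)) • h x)
          = ∫ t, (starRingEnd ℂ) (E n t) * h t ∂μ := by
        rw [intervalIntegral.integral_of_le (by linarith), ← hres]
        apply integral_congr_ae
        refine Filter.Eventually.of_forall (fun x => ?_)
        simp only [smul_eq_mul]
        rw [hfour x]
      rw [h10, hφ n, smul_zero]
    have hX0 : X = 0 := by
      have h11 : (fourierBasis (T := τ)).repr X = 0 := by
        apply lp.ext
        funext n
        rw [fourierBasis_repr]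
        simpa using hXcoeff n
      have h12 := congrArg (fourierBasis (T := τ)).repr.symm h11
      rwa [LinearIsometryEquiv.symm_apply_apply, map_zero] at h12
    have hG0 : G =ᵐ[(volume : Measure (AddCircle τ))] 0 := by
      have h13 : G =ᵐ[(AddCircle.haarAddCircle : Measure (AddCircle τ))] 0 := by
        have h14 := hGmem.coeFn_toLp
        rw [← hX_def] at h14
        rw [hX0] at h14
        exact h14.symm.trans (Lp.coeFn_zero ℂ 2 _)
      rw [AddCircle.volume_eq_smul_haarAddCircle]
      exact Measure.ae_smul_measure h13 _
    have hh0 : h =ᵐ[μ] 0 := by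
      rw [← hres]
      have h15 : ∀ᵐ (t : ℝ) ∂(volume.restrict (Set.Ioc (0:ℝ) (0+τ))),
          G ((t : ℝ) : AddCircle τ) = 0 :=
        (AddCircle.measurePreserving_mk τ 0).quasiMeasurePreserving.ae hG0
      filter_upwards [h15, hGcomp] with t h16 h17
      rw [Pi.zero_apply, ← h17]
      exact h16
    have hf0 : (⇑f : ℝ → ℂ) =ᵐ[μ] 0 := by
      filter_upwards [hfe, hh0] with t h1 h2
      have hgne : (starRingEnd ℂ) (g t) ≠ 0 := by
        intro hz'
        have := Complex.exp_ne_zero ((((-(a/(2*b))*t^2) : ℝ) : ℂ) * Complex.I)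
        apply this
        have h18 : g t = 0 := by
          rw [← Complex.conj_conj (g t), hz', map_zero]
        simpa only [hg_def] using h18
      simp only [hh_def, Pi.zero_apply] at h2
      rw [Pi.zero_apply, h1]
      exact (mul_eq_zero.mp h2).resolve_left hgne
    exact MeasureTheory.Lp.ext (hf0.trans (MeasureTheory.Lp.coeFn_zero ℂ 2 μ).symm)
  have hsp : ⊤ ≤ (Submodule.span ℂ (Set.range v)).topologicalClosure :=
    ge_of_eq (Submodule.topologicalClosure_eq_top_iff.mpr hKbot)
  refine ⟨part1, ⟨HilbertBasis.mk horth hsp, fun n => ?_⟩⟩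
  have hB : ⇑(HilbertBasis.mk horth hsp) = v := HilbertBasis.coe_mk horth hsp
  rw [hB]
  exact (hmem n).coeFn_toLp
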